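/- Let f_h and f_l be likelihood-ratio experiments on [a_h,b_h] and [a_l,b_l] with 0 ≤ a_h < a_l < b_l < b_h ≤ ∞ satisfying, for each state s ∈ {0,1} and ℓ ∈ (a_l,b_l), f_{l,s}(ℓ)/F_{l,s}(ℓ) > f_{h,s}(ℓ)/F_{h,s}(ℓ) and f_{l,s}(ℓ)/(1−F_{l,s}(ℓ)) > f_{h,s}(ℓ)/(1−F_{h,s}(ℓ)). Fix p ∈ (0,1) and μ, μ′ ∈ [1/2,1) with μ < μ′. Suppose that at both μ and μ′ the crossing beliefs satisfy β†_1 < β†_0, and let β_μ and β_{μ′} be the unique solutions of the indifference equation at μ and μ′ respectively. Then β_μ < β_{μ′}. -/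

import Mathlib

open MeasureTheory Set

/-- State-0 CDF of a likelihood-ratio experiment. -/
noncomputable def F0 (f : ℝ → ℝ) (ℓ : ℝ) : ℝ := ∫ u in (0:ℝ)..ℓ, f u

/-- State-1 CDF of a likelihood-ratio experiment. -/
noncomputable def F1 (f : ℝ → ℝ) (ℓ : ℝ) : ℝ := ∫ u in (0:ℝ)..ℓ, u * f u

/-- State-`s` CDF, `s ∈ {0,1}`. -/
noncomputable def Fs (f : ℝ → ℝ) (s : Fin 2) (ℓ : ℝ) : ℝ :=
  if s = 0 then F0 f ℓ else F1 f ℓ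

/-- State-`s` density, `s ∈ {0,1}`: `f` in state 0 and `ℓ·f(ℓ)` in state 1. -/
noncomputable def fs (f : ℝ → ℝ) (s : Fin 2) (ℓ : ℝ) : ℝ :=
  if s = 0 then f ℓ else ℓ * f ℓ

/-- A likelihood-ratio experiment on `[a, b]` with `0 ≤ a < b ≤ ∞`. -/
structure IsLRExperiment (f : ℝ → ℝ) (a : ℝ) (b : EReal) : Prop where
  a_nonneg : 0 ≤ a
  a_lt_b : (a : EReal) < b
  cont : Continuous f
  pos : ∀ ℓ : ℝ, a < ℓ → (ℓ : EReal) < b → 0 < f ℓ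
  zero_outside : ∀ ℓ : ℝ, (ℓ < a ∨ b < (ℓ : EReal)) → f ℓ = 0
  int_one : (∫ ℓ in Ioi (0:ℝ), f ℓ) = 1
  int_mean : (∫ ℓ in Ioi (0:ℝ), ℓ * f ℓ) = 1

/-- The low type's experiment is noisier: reverse-hazard-rate and hazard-rate dominance
in each state on the interior of the low type's support. -/
def Noisier (fh fl : ℝ → ℝ) (a_l b_l : ℝ) : Prop :=
  ∀ s : Fin 2, ∀ ℓ : ℝ, a_l < ℓ → ℓ < b_l →
    fs fl s ℓ / Fs fl s ℓ > fs fh s ℓ / Fs fh s ℓ ∧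
    fs fl s ℓ / (1 - Fs fl s ℓ) > fs fh s ℓ / (1 - Fs fh s ℓ)

/-- Likelihood-ratio cutoff corresponding to belief `β` under prior `μ`. -/
noncomputable def zOf (μ β : ℝ) : ℝ := (1 - μ) * β / (μ * (1 - β))

/-- Distribution of the posterior state belief conditional on state `s`. -/
noncomputable def H (f : ℝ → ℝ) (μ : ℝ) (s : Fin 2) (β : ℝ) : ℝ :=
  Fs f s (zOf μ β)

/-- Posterior belief induced by likelihood ratio `x` under prior `μ`. -/
noncomputable def betaOf (μ x : ℝ) : ℝ := μ * x / (μ * x + 1 - μ)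

/-- `βd` is the crossing belief in state `s`: it lies in `(β̲_l, β̄_l)` and
`H_{h,s} − H_{l,s}` is positive below it, zero at it, and negative above it on the high
type's belief range (expressed via `betaOf μ a_h < β`, `β < 1`, `z(β) < b_h`). -/
def IsCrossingBelief (fh fl : ℝ → ℝ) (a_h a_l b_l : ℝ) (b_h : EReal)
    (μ : ℝ) (s : Fin 2) (βd : ℝ) : Prop :=
  βd ∈ Set.Ioo (betaOf μ a_l) (betaOf μ b_l) ∧
  ∀ β : ℝ, betaOf μ a_h < β → β < 1 → ((zOf μ β : ℝ) : EReal) < b_h →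
    ((β < βd → H fh μ s β - H fl μ s β > 0) ∧
     (β = βd → H fh μ s β - H fl μ s β = 0) ∧
     (βd < β → H fh μ s β - H fl μ s β < 0))

/-- Left side of the indifference equation: the sender's expected reputational gain from
report 1 over report 0, at state belief `β`, when the market conjectures the `β`-cutoff
strategy profile. -/
noncomputable def indiffLHS (fh fl : ℝ → ℝ) (μ p β : ℝ) : ℝ :=
  β * ((1 - H fh μ 1 β) / (p * (1 - H fh μ 1 β) + (1 - p) * (1 - H fl μ 1 β))
      - H fh μ 1 β / (p * H fh μ 1 β + (1 - p) * H fl μ 1 β))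

/-- Right side of the indifference equation. -/
noncomputable def indiffRHS (fh fl : ℝ → ℝ) (μ p β : ℝ) : ℝ :=
  (1 - β) * (H fh μ 0 β / (p * H fh μ 0 β + (1 - p) * H fl μ 0 β)
      - (1 - H fh μ 0 β) / (p * (1 - H fh μ 0 β) + (1 - p) * (1 - H fl μ 0 β)))

namespace IsLRExperiment

variable {f : ℝ → ℝ} {a : ℝ} {b : EReal}

lemma f_nonneg (h : IsLRExperiment f a b) : ∀ ℓ : ℝ, 0 ≤ f ℓ := by
  by_contra hc
  push_neg at hc
  obtain ⟨ℓ, hℓ⟩ := hc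
  have hopen : IsOpen {x : ℝ | f x < 0} := isOpen_lt h.cont continuous_const
  obtain ⟨ε, hε, hball⟩ := Metric.isOpen_iff.1 hopen ℓ hℓ
  obtain ⟨x, hx1, hx2, hx3⟩ : ∃ x : ℝ, f x < 0 ∧ x ≠ a ∧ x ≠ b.toReal := by
    by_contra hno
    push_neg at hno
    have h1 := hno (ℓ - ε/2) (hball (Metric.mem_ball.2 (by rw [Real.dist_eq]; rw [show ℓ - ε/2 - ℓ = -(ε/2) by ring, abs_neg, abs_of_nonneg (by linarith)]; linarith)))
    have h2 := hno ℓ hℓ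
    have h3 := hno (ℓ + ε/2) (hball (Metric.mem_ball.2 (by rw [Real.dist_eq]; rw [show ℓ + ε/2 - ℓ = ε/2 by ring, abs_of_nonneg (by linarith)]; linarith)))
    rcases Classical.em ((ℓ - ε/2) = a) with e1|e1
    · rcases Classical.em (ℓ = a) with e2|e2
      · linarith
      · rcases Classical.em ((ℓ + ε/2) = a) with e3|e3
        · linarith
        · have := h2 e2; have := h3 e3; linarith
    · rcases Classical.em (ℓ = a) with e2|e2
      · rcases Classical.em ((ℓ + ε/2) = a) with e3|e3
        · linarith
        · have := h1 e1; have := h3 e3; linarith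
      · have := h1 e1; have := h2 e2; linarith
  have hxb : (x : EReal) ≠ b := by
    intro hb
    apply hx3
    rw [← hb]
    simp [EReal.toReal_coe]
  rcases lt_trichotomy x a with hlt|heq|hgt
  · have := h.zero_outside x (Or.inl hlt); linarith
  · exact hx2 heq
  · rcases lt_trichotomy ((x : EReal)) b with hlt'|heq'|hgt'
    · have := h.pos x hgt hlt'; linarith
    · exact hxb heq'
    · have := h.zero_outside x (Or.inr hgt'); linarith

lemma _root_.Continuous.fs_cont (hc : Continuous f) (s : Fin 2) : Continuous (fs f s) := by
  unfold fs
  split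
  · exact hc
  · exact continuous_id.mul hc

lemma fs_nonneg (h : IsLRExperiment f a b) (s : Fin 2) {ℓ : ℝ} (hℓ : 0 ≤ ℓ) : 0 ≤ fs f s ℓ := by
  unfold fs
  split
  · exact h.f_nonneg ℓ
  · exact mul_nonneg hℓ (h.f_nonneg ℓ)

lemma hasDerivAt_F0 (h : IsLRExperiment f a b) (z : ℝ) : HasDerivAt (F0 f) (f z) z :=
  intervalIntegral.integral_hasDerivAt_right (h.cont.intervalIntegrable _ _)
    (h.cont.aestronglyMeasurable.stronglyMeasurableAtFilter)
    h.cont.continuousAt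

lemma hasDerivAt_F1 (h : IsLRExperiment f a b) (z : ℝ) : HasDerivAt (F1 f) (z * f z) z :=
  intervalIntegral.integral_hasDerivAt_right ((continuous_id.mul h.cont).intervalIntegrable _ _)
    ((continuous_id.mul h.cont).aestronglyMeasurable.stronglyMeasurableAtFilter)
    (continuous_id.mul h.cont).continuousAt

lemma hasDerivAt_Fs (h : IsLRExperiment f a b) (s : Fin 2) (z : ℝ) :
    HasDerivAt (Fs f s) (fs f s z) z := by
  unfold Fs fs
  split
  · exact h.hasDerivAt_F0 z
  · exact h.hasDerivAt_F1 z

-- auxiliary: find a real point strictly between c and b (EReal), where c < b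
lemma exists_real_between (c : ℝ) (hc : (c : EReal) < b) :
    ∃ d : ℝ, c < d ∧ (d : EReal) < b := by
  induction b with
  | bot => exact absurd hc (by simp)
  | coe r =>
    refine ⟨(c + r)/2, ?_, ?_⟩
    · have : c < r := by exact_mod_cast hc
      linarith
    · have : c < r := by exact_mod_cast hc
      exact_mod_cast (by linarith : (c + r)/2 < r)
  | top => exact ⟨c + 1, by linarith, EReal.coe_lt_top _⟩

lemma intervalIntegral_fs_pos (h : IsLRExperiment f a b) (s : Fin 2) {c d : ℝ}
    (hac : a ≤ c) (hcd : c < d) (hdb : (d : EReal) ≤ b) :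
    0 < ∫ u in c..d, fs f s u := by
  apply intervalIntegral.intervalIntegral_pos_of_pos_on
  · exact ((h.cont.fs_cont s).intervalIntegrable _ _)
  · intro x hx
    have hfx : 0 < f x := h.pos x (lt_of_le_of_lt hac hx.1)
      (lt_of_lt_of_le (by exact_mod_cast hx.2) hdb)
    have hx0 : 0 < x := lt_of_le_of_lt (le_trans h.a_nonneg hac) hx.1
    unfold fs
    split
    · exact hfx
    · exact mul_pos hx0 hfx
  · exact hcd

lemma Fs_pos (h : IsLRExperiment f a b) (s : Fin 2) {z : ℝ} (hz : a < z) : 0 < Fs f s z := by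
  obtain ⟨d, had, hdz, hdb⟩ : ∃ d : ℝ, a < d ∧ d ≤ z ∧ (d : EReal) ≤ b := by
    rcases lt_or_ge ((z : EReal)) b with hzb | hbz
    · exact ⟨z, hz, le_refl _, le_of_lt hzb⟩
    · obtain ⟨d, had, hdb⟩ := exists_real_between (b := b) a h.a_lt_b
      refine ⟨d, had, ?_, le_of_lt hdb⟩
      have : (d : EReal) < (z : EReal) := lt_of_lt_of_le hdb hbz
      exact_mod_cast le_of_lt this
  have key : Fs f s z = (∫ u in (0:ℝ)..a, fs f s u) + (∫ u in a..d, fs f s u)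
      + (∫ u in d..z, fs f s u) := by
    have i1 : IntervalIntegrable (fs f s) volume 0 a := (h.cont.fs_cont s).intervalIntegrable _ _
    have i2 : IntervalIntegrable (fs f s) volume a d := (h.cont.fs_cont s).intervalIntegrable _ _
    have i3 : IntervalIntegrable (fs f s) volume d z := (h.cont.fs_cont s).intervalIntegrable _ _
    have e1 := intervalIntegral.integral_add_adjacent_intervals i1 i2
    have e2 := intervalIntegral.integral_add_adjacent_intervals (i1.trans i2) i3
    have : Fs f s z = ∫ u in (0:ℝ)..z, fs f s u := by
      unfold Fs F0 F1 fs
      split <;> simp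
    rw [this, ← e2, ← e1]
  rw [key]
  have n1 : 0 ≤ ∫ u in (0:ℝ)..a, fs f s u := by
    apply intervalIntegral.integral_nonneg h.a_nonneg
    intro u hu; exact h.fs_nonneg s hu.1
  have n3 : 0 ≤ ∫ u in d..z, fs f s u := by
    apply intervalIntegral.integral_nonneg hdz
    intro u hu; exact h.fs_nonneg s (le_trans (le_trans h.a_nonneg (le_of_lt had)) hu.1)
  have p2 : 0 < ∫ u in a..d, fs f s u := h.intervalIntegral_fs_pos s le_rfl had hdb
  linarith

lemma int_fs (h : IsLRExperiment f a b) (s : Fin 2) : (∫ ℓ in Ioi (0:ℝ), fs f s ℓ) = 1 := by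
  unfold fs
  split
  · exact h.int_one
  · exact h.int_mean

lemma integrableOn_fs (h : IsLRExperiment f a b) (s : Fin 2) :
    IntegrableOn (fs f s) (Ioi (0:ℝ)) := by
  by_contra hc
  have := MeasureTheory.integral_undef hc
  rw [h.int_fs s] at this
  norm_num at this

lemma Fs_lt_one (h : IsLRExperiment f a b) (s : Fin 2) {z : ℝ} (hz0 : 0 ≤ z)
    (hz : (z : EReal) < b) : Fs f s z < 1 := by
  have hsplit : (∫ ℓ in Ioi (0:ℝ), fs f s ℓ)
      = (∫ ℓ in Ioc (0:ℝ) z, fs f s ℓ) + ∫ ℓ in Ioi z, fs f s ℓ := by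
    rw [← MeasureTheory.setIntegral_union (Ioc_disjoint_Ioi le_rfl) measurableSet_Ioi
      ((h.integrableOn_fs s).mono_set Ioc_subset_Ioi_self)
      ((h.integrableOn_fs s).mono_set (Ioi_subset_Ioi hz0)),
      Ioc_union_Ioi_eq_Ioi hz0]
  have hFs : Fs f s z = ∫ ℓ in Ioc (0:ℝ) z, fs f s ℓ := by
    have : Fs f s z = ∫ u in (0:ℝ)..z, fs f s u := by
      unfold Fs F0 F1 fs; split <;> simp
    rw [this, intervalIntegral.integral_of_le hz0]
  -- tail is positive
  set c := max z a with hc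
  have hcb : (c : EReal) < b := by
    rcases max_cases z a with ⟨hc1, _⟩ | ⟨hc1, _⟩ <;> rw [hc, hc1]
    · exact hz
    · exact h.a_lt_b
  obtain ⟨d, hcd, hdb⟩ := exists_real_between (b := b) c hcb
  have htail : 0 < ∫ ℓ in Ioi z, fs f s ℓ := by
    have hsub : Ioc c d ⊆ Ioi z := fun x hx => lt_of_le_of_lt (le_max_left z a) hx.1
    have h1 : (∫ ℓ in Ioc c d, fs f s ℓ) ≤ ∫ ℓ in Ioi z, fs f s ℓ := by
      apply MeasureTheory.setIntegral_mono_set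
        ((h.integrableOn_fs s).mono_set (Ioi_subset_Ioi hz0))
      · filter_upwards [MeasureTheory.ae_restrict_mem measurableSet_Ioi] with x hx
        exact h.fs_nonneg s (le_of_lt (lt_of_le_of_lt hz0 hx))
      · exact Filter.Eventually.of_forall hsub
    have h2 : 0 < ∫ ℓ in Ioc c d, fs f s ℓ := by
      rw [← intervalIntegral.integral_of_le (le_of_lt hcd)]
      exact h.intervalIntegral_fs_pos s (le_max_right z a) hcd (le_of_lt hdb)
    linarith
  have := h.int_fs s
  rw [hsplit] at this
  rw [hFs]
  linarith

end IsLRExperiment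

section BetaZ
variable {μ μ' : ℝ} (hμ0 : 0 < μ) (hμ1 : μ < 1)
include hμ0 hμ1

lemma betaOf_denom_pos {x : ℝ} (hx : 0 ≤ x) : 0 < μ * x + 1 - μ := by nlinarith

lemma betaOf_nonneg {x : ℝ} (hx : 0 ≤ x) : 0 ≤ betaOf μ x :=
  div_nonneg (by positivity) (le_of_lt (betaOf_denom_pos hμ0 hμ1 hx))

lemma betaOf_pos {x : ℝ} (hx : 0 < x) : 0 < betaOf μ x :=
  div_pos (by positivity) (betaOf_denom_pos hμ0 hμ1 hx.le)

lemma betaOf_lt_one {x : ℝ} (hx : 0 ≤ x) : betaOf μ x < 1 := by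
  rw [betaOf, div_lt_one (betaOf_denom_pos hμ0 hμ1 hx)]
  linarith

lemma betaOf_strictMono : StrictMonoOn (betaOf μ) (Ici 0) := by
  intro x hx y hy hxy
  rw [betaOf, betaOf, div_lt_div_iff₀ (betaOf_denom_pos hμ0 hμ1 hx)
    (betaOf_denom_pos hμ0 hμ1 hy)]
  nlinarith [mul_pos (mul_pos hμ0 (show (0:ℝ) < 1 - μ by linarith)) (show (0:ℝ) < y - x by linarith)]

lemma zOf_betaOf {x : ℝ} (hx : 0 ≤ x) : zOf μ (betaOf μ x) = x := by
  have h1 : 0 < μ * x + 1 - μ := betaOf_denom_pos hμ0 hμ1 hx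
  have hD : μ * x + 1 - μ ≠ 0 := ne_of_gt h1
  have h2 : μ - μ^2 ≠ 0 := by nlinarith
  have h3 : μ ≠ 0 := ne_of_gt hμ0
  have h4 : (1:ℝ) - μ ≠ 0 := by linarith
  rw [zOf, betaOf]
  field_simp
  have := mul_inv_cancel₀ h2
  rw [show μ * x + 1 - μ - μ * x = 1 - μ by ring, mul_div_cancel_left₀ _ h4]

lemma betaOf_zOf {β : ℝ} (hβ0 : 0 ≤ β) (hβ1 : β < 1) : betaOf μ (zOf μ β) = β := by
  have h1 : μ * (1 - β) ≠ 0 := ne_of_gt (by nlinarith)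
  have h3 : μ ≠ 0 := ne_of_gt hμ0
  have h4 : (1:ℝ) - β ≠ 0 := by linarith
  have h2 : μ - μ^2 ≠ 0 := by nlinarith
  rw [betaOf, zOf]
  field_simp
  have := mul_inv_cancel₀ h2
  rw [show (1 - μ) * β + (1 - β) - μ * (1 - β) = 1 - μ by ring, mul_div_cancel_left₀ _ (sub_ne_zero.2 (ne_of_gt hμ1))]

lemma zOf_nonneg {β : ℝ} (hβ0 : 0 ≤ β) (hβ1 : β < 1) : 0 ≤ zOf μ β := by
  apply div_nonneg (by nlinarith) (by nlinarith)

lemma zOf_mono {β β' : ℝ} (h0 : 0 ≤ β') (hle : β' ≤ β) (h1 : β < 1) :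
    zOf μ β' ≤ zOf μ β := by
  apply div_le_div₀ (by nlinarith) (by nlinarith) (by nlinarith) (by nlinarith)

lemma zOf_strict_mono {β β' : ℝ} (h0 : 0 ≤ β') (hle : β' < β) (h1 : β < 1) :
    zOf μ β' < zOf μ β := by
  rw [zOf, zOf, div_lt_div_iff₀ (by nlinarith) (by nlinarith)]
  nlinarith [mul_pos (mul_pos hμ0 (show (0:ℝ) < 1 - μ by linarith)) (show (0:ℝ) < β - β' by linarith)]

lemma zOf_anti_mu (hμ'1 : μ' < 1) (hμμ' : μ < μ') {β : ℝ} (hβ0 : 0 < β) (hβ1 : β < 1) :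
    zOf μ' β < zOf μ β := by
  rw [zOf, zOf, div_lt_div_iff₀ (by nlinarith) (by nlinarith)]
  nlinarith [mul_pos (mul_pos hβ0 (show (0:ℝ) < 1 - β by linarith)) (show (0:ℝ) < μ' - μ by linarith)]

end BetaZ

lemma ratio_strictMonoOn {u v du dv : ℝ → ℝ} {a b : ℝ}
    (hu : ∀ x, HasDerivAt u (du x) x) (hv : ∀ x, HasDerivAt v (dv x) x)
    (hvpos : ∀ x ∈ Ioo a b, 0 < v x)
    (hnum : ∀ x ∈ Ioo a b, u x * dv x < du x * v x) :
    StrictMonoOn (fun x => u x / v x) (Ioo a b) := by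
  have hd : ∀ x ∈ Ioo a b, HasDerivAt (fun y => u y / v y)
      ((du x * v x - u x * dv x) / (v x)^2) x := fun x hx =>
    (hu x).div (hv x) (ne_of_gt (hvpos x hx))
  apply strictMonoOn_of_deriv_pos (convex_Ioo a b)
  · intro x hx
    exact ((hd x hx).differentiableAt).continuousAt.continuousWithinAt
  · intro x hx
    rw [interior_Ioo] at hx
    rw [(hd x hx).deriv]
    apply div_pos (by linarith [hnum x hx]) (pow_pos (hvpos x hx) 2)

lemma ratio_strictAntiOn {u v du dv : ℝ → ℝ} {a b : ℝ}
    (hu : ∀ x, HasDerivAt u (du x) x) (hv : ∀ x, HasDerivAt v (dv x) x)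
    (hvpos : ∀ x ∈ Ioo a b, 0 < v x)
    (hnum : ∀ x ∈ Ioo a b, du x * v x < u x * dv x) :
    StrictAntiOn (fun x => u x / v x) (Ioo a b) := by
  have hd : ∀ x ∈ Ioo a b, HasDerivAt (fun y => u y / v y)
      ((du x * v x - u x * dv x) / (v x)^2) x := fun x hx =>
    (hu x).div (hv x) (ne_of_gt (hvpos x hx))
  apply strictAntiOn_of_deriv_neg (convex_Ioo a b)
  · intro x hx
    exact ((hd x hx).differentiableAt).continuousAt.continuousWithinAt
  · intro x hx
    rw [interior_Ioo] at hx
    rw [(hd x hx).deriv]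
    apply div_neg_of_neg_of_pos (by linarith [hnum x hx]) (pow_pos (hvpos x hx) 2)

/-- `φ p A B` : the reputational-gain term. -/
noncomputable def phiFn (p A B : ℝ) : ℝ :=
  (1 - A) / (p * (1 - A) + (1 - p) * (1 - B)) - A / (p * A + (1 - p) * B)

lemma phiFn_eq (p A B : ℝ) (hp : 0 < p) (hp1 : p < 1)
    (hA : 0 < A) (hA1 : A < 1) (hB : 0 < B) (hB1 : B < 1) :
    phiFn p A B = 1 / (p + (1 - p) * ((1 - B) / (1 - A))) - 1 / (p + (1 - p) * (B / A)) := by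
  have h1 : (1:ℝ) - A ≠ 0 := by linarith
  have h2 : A ≠ 0 := ne_of_gt hA
  have d1 : p * (1 - A) + (1 - p) * (1 - B) > 0 := by nlinarith
  have d2 : p * A + (1 - p) * B > 0 := by nlinarith
  rw [phiFn]
  rw [show p + (1 - p) * ((1 - B) / (1 - A)) = (p * (1 - A) + (1 - p) * (1 - B)) / (1 - A) by
    field_simp]
  rw [show p + (1 - p) * (B / A) = (p * A + (1 - p) * B) / A by field_simp]
  rw [one_div_div, one_div_div]

lemma inv_term_lt {p t t' : ℝ} (hp : 0 < p) (hp1 : p < 1) (ht : 0 < t) (h : t < t') :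
    1 / (p + (1 - p) * t') < 1 / (p + (1 - p) * t) := by
  apply one_div_lt_one_div_of_lt (by nlinarith) (by nlinarith)

lemma phiFn_pos {p A B : ℝ} (hp : 0 < p) (hp1 : p < 1)
    (hA : 0 < A) (hA1 : A < 1) (hB : 0 < B) (hB1 : B < 1) (hAB : A < B) :
    0 < phiFn p A B := by
  rw [phiFn_eq p A B hp hp1 hA hA1 hB hB1]
  have h1 : (1 - B) / (1 - A) < 1 := by rw [div_lt_one (by linarith)]; linarith
  have h2 : (1:ℝ) < B / A := by rw [lt_div_iff₀ hA]; linarith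
  have k1 := inv_term_lt hp hp1 (show (0:ℝ) < (1 - B)/(1 - A) from div_pos (by linarith) (by linarith)) (lt_trans h1 h2)
  -- need strict chain from (1-B)/(1-A) < 1 < B/A
  have k2 := inv_term_lt hp hp1 (show (0:ℝ) < (1 - B)/(1 - A) from div_pos (by linarith) (by linarith)) h1
  have k3 := inv_term_lt hp hp1 one_pos h2
  linarith

lemma phiFn_strict {p A B A' B' : ℝ} (hp : 0 < p) (hp1 : p < 1)
    (hA : 0 < A) (hA1 : A < 1) (hB : 0 < B) (hB1 : B < 1)
    (hA' : 0 < A') (hA1' : A' < 1) (hB' : 0 < B') (hB1' : B' < 1)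
    (h1 : (1 - B') / (1 - A') < (1 - B) / (1 - A))
    (h2 : B / A < B' / A') :
    phiFn p A B < phiFn p A' B' := by
  rw [phiFn_eq p A B hp hp1 hA hA1 hB hB1, phiFn_eq p A' B' hp hp1 hA' hA1' hB' hB1']
  have k1 := inv_term_lt hp hp1 (show (0:ℝ) < (1 - B')/(1 - A') from div_pos (by linarith) (by linarith)) h1
  have k2 := inv_term_lt hp hp1 (show (0:ℝ) < B/A from div_pos hB hA) h2
  linarith


section Crossing
variable {fh fl : ℝ → ℝ} {a_h a_l b_l : ℝ} {b_h : EReal} {μ : ℝ} {s : Fin 2} {βd : ℝ}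
variable (hah : 0 ≤ a_h) (hal : a_h < a_l) (halb : a_l < b_l)
  (hμ0 : 0 < μ) (hμ1 : μ < 1)
include hah hal halb hμ0 hμ1

lemma crossing_unit (hc : IsCrossingBelief fh fl a_h a_l b_l b_h μ s βd) :
    βd ∈ Ioo (0:ℝ) 1 := by
  obtain ⟨⟨hlo, hhi⟩, _⟩ := hc
  constructor
  · exact lt_trans (betaOf_pos hμ0 hμ1 (by linarith)) hlo
  · exact lt_trans hhi (betaOf_lt_one hμ0 hμ1 (by linarith))

lemma crossing_z_mem (hc : IsCrossingBelief fh fl a_h a_l b_l b_h μ s βd) :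
    zOf μ βd ∈ Ioo a_l b_l := by
  obtain ⟨h01, h11⟩ := crossing_unit hah hal halb hμ0 hμ1 hc
  obtain ⟨⟨hlo, hhi⟩, _⟩ := hc
  constructor
  · have := zOf_strict_mono hμ0 hμ1 (betaOf_nonneg hμ0 hμ1 (by linarith : (0:ℝ) ≤ a_l)) hlo h11
    rwa [zOf_betaOf hμ0 hμ1 (by linarith : (0:ℝ) ≤ a_l)] at this
  · have := zOf_strict_mono hμ0 hμ1 (le_of_lt h01) hhi
      (betaOf_lt_one hμ0 hμ1 (by linarith : (0:ℝ) ≤ b_l))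
    rwa [zOf_betaOf hμ0 hμ1 (by linarith : (0:ℝ) ≤ b_l)] at this

lemma crossing_sign_lt (hc : IsCrossingBelief fh fl a_h a_l b_l b_h μ s βd)
    {z : ℝ} (hz1 : a_h < z) (hzb : (z : EReal) < b_h) (hzd : z < zOf μ βd) :
    0 < Fs fh s z - Fs fl s z := by
  obtain ⟨h01, h11⟩ := crossing_unit hah hal halb hμ0 hμ1 hc
  have hz0 : (0:ℝ) ≤ z := le_trans hah (le_of_lt hz1)
  have hzd0 : (0:ℝ) ≤ zOf μ βd := le_trans (by linarith [(crossing_z_mem hah hal halb hμ0 hμ1 hc).1] : (0:ℝ) ≤ a_l) (le_of_lt (crossing_z_mem hah hal halb hμ0 hμ1 hc).1)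
  have hβz1 : betaOf μ a_h < betaOf μ z := betaOf_strictMono hμ0 hμ1 (mem_Ici.2 hah) (mem_Ici.2 hz0) hz1
  have hβz2 : betaOf μ z < 1 := betaOf_lt_one hμ0 hμ1 hz0
  have hzeq : zOf μ (betaOf μ z) = z := zOf_betaOf hμ0 hμ1 hz0
  have hβzd : betaOf μ z < βd := by
    have := betaOf_strictMono hμ0 hμ1 (mem_Ici.2 hz0) (mem_Ici.2 hzd0) hzd
    rwa [betaOf_zOf hμ0 hμ1 (le_of_lt h01) h11] at this
  have := ((hc.2 (betaOf μ z) hβz1 hβz2 (by rw [hzeq]; exact hzb)).1) hβzd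
  rwa [H, H, hzeq] at this

lemma crossing_sign_gt (hc : IsCrossingBelief fh fl a_h a_l b_l b_h μ s βd)
    {z : ℝ} (hz1 : a_h < z) (hzb : (z : EReal) < b_h) (hzd : zOf μ βd < z) :
    Fs fh s z - Fs fl s z < 0 := by
  obtain ⟨h01, h11⟩ := crossing_unit hah hal halb hμ0 hμ1 hc
  have hz0 : (0:ℝ) ≤ z := le_trans hah (le_of_lt hz1)
  have hzd0 : (0:ℝ) ≤ zOf μ βd := le_trans (by linarith [(crossing_z_mem hah hal halb hμ0 hμ1 hc).1] : (0:ℝ) ≤ a_l) (le_of_lt (crossing_z_mem hah hal halb hμ0 hμ1 hc).1)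
  have hβz1 : betaOf μ a_h < betaOf μ z := betaOf_strictMono hμ0 hμ1 (mem_Ici.2 hah) (mem_Ici.2 hz0) (by linarith [(crossing_z_mem hah hal halb hμ0 hμ1 hc).1])
  have hβz2 : betaOf μ z < 1 := betaOf_lt_one hμ0 hμ1 hz0
  have hzeq : zOf μ (betaOf μ z) = z := zOf_betaOf hμ0 hμ1 hz0
  have hβzd : βd < betaOf μ z := by
    have := betaOf_strictMono hμ0 hμ1 (mem_Ici.2 hzd0) (mem_Ici.2 hz0) hzd
    rwa [betaOf_zOf hμ0 hμ1 (le_of_lt h01) h11] at this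
  have := ((hc.2 (betaOf μ z) hβz1 hβz2 (by rw [hzeq]; exact hzb)).2.2) hβzd
  rwa [H, H, hzeq] at this

end Crossing

lemma crossing_z_eq {fh fl : ℝ → ℝ} {a_h a_l b_l : ℝ} {b_h : EReal} {μ μ' : ℝ}
    {s : Fin 2} {βd βd' : ℝ}
    (hah : 0 ≤ a_h) (hal : a_h < a_l) (halb : a_l < b_l) (hbb : (b_l : EReal) < b_h)
    (hμ0 : 0 < μ) (hμ1 : μ < 1) (hμ0' : 0 < μ') (hμ1' : μ' < 1)
    (hc : IsCrossingBelief fh fl a_h a_l b_l b_h μ s βd)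
    (hc' : IsCrossingBelief fh fl a_h a_l b_l b_h μ' s βd') :
    zOf μ βd = zOf μ' βd' := by
  have hm := crossing_z_mem hah hal halb hμ0 hμ1 hc
  have hm' := crossing_z_mem hah hal halb hμ0' hμ1' hc'
  by_contra hne
  rcases lt_or_gt_of_ne hne with hlt | hgt
  · set m := (zOf μ βd + zOf μ' βd') / 2 with hm2
    have h1 : a_h < m := by cases hm; cases hm'; dsimp [m]; linarith
    have h2 : (m : EReal) < b_h := by
      refine lt_trans ?_ hbb
      exact_mod_cast (by cases hm; cases hm'; dsimp [m]; linarith : m < b_l)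
    have s1 := crossing_sign_gt hah hal halb hμ0 hμ1 hc h1 h2 (by dsimp [m]; linarith)
    have s2 := crossing_sign_lt hah hal halb hμ0' hμ1' hc' h1 h2 (by dsimp [m]; linarith)
    linarith
  · set m := (zOf μ βd + zOf μ' βd') / 2 with hm2
    have h1 : a_h < m := by cases hm; cases hm'; dsimp [m]; linarith
    have h2 : (m : EReal) < b_h := by
      refine lt_trans ?_ hbb
      exact_mod_cast (by cases hm; cases hm'; dsimp [m]; linarith : m < b_l)
    have s1 := crossing_sign_lt hah hal halb hμ0 hμ1 hc h1 h2 (by dsimp [m]; linarith)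
    have s2 := crossing_sign_gt hah hal halb hμ0' hμ1' hc' h1 h2 (by dsimp [m]; linarith)
    linarith

/-- The informative-equilibrium belief cutoff is strictly increasing in the prior state
belief: if `μ < μ′` and `β_μ`, `β_{μ′}` are the unique solutions of the indifference
equation at `μ` and `μ′` (each lying between the respective crossing beliefs), then
`β_μ < β_{μ′}`. -/
theorem stmt_5 (fh fl : ℝ → ℝ) (a_h a_l b_l : ℝ) (b_h : EReal)
    (hh : IsLRExperiment fh a_h b_h) (hl : IsLRExperiment fl a_l (b_l : EReal))
    (hab : a_h < a_l) (hbb : (b_l : EReal) < b_h)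
    (hdom : Noisier fh fl a_l b_l)
    (p : ℝ) (hp : p ∈ Set.Ioo (0:ℝ) 1)
    (μ μ' : ℝ) (hμ : μ ∈ Set.Ico (1/2 : ℝ) 1) (hμ' : μ' ∈ Set.Ico (1/2 : ℝ) 1)
    (hμμ' : μ < μ')
    (βd0 βd1 : ℝ)
    (hc0 : IsCrossingBelief fh fl a_h a_l b_l b_h μ 0 βd0)
    (hc1 : IsCrossingBelief fh fl a_h a_l b_l b_h μ 1 βd1)
    (hlt : βd1 < βd0)
    (βd0' βd1' : ℝ)
    (hc0' : IsCrossingBelief fh fl a_h a_l b_l b_h μ' 0 βd0')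
    (hc1' : IsCrossingBelief fh fl a_h a_l b_l b_h μ' 1 βd1')
    (hlt' : βd1' < βd0')
    (βμ βμ' : ℝ)
    (hβμ : βμ ∈ Set.Ioo βd1 βd0)
    (heq : indiffLHS fh fl μ p βμ = indiffRHS fh fl μ p βμ)
    (hβμ' : βμ' ∈ Set.Ioo βd1' βd0')
    (heq' : indiffLHS fh fl μ' p βμ' = indiffRHS fh fl μ' p βμ') :
    βμ < βμ' := by
  obtain ⟨hp0, hp1⟩ := hp
  obtain ⟨hμlo, hμhi⟩ := hμ
  obtain ⟨hμlo', hμhi'⟩ := hμ'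
  have hμ0 : (0:ℝ) < μ := by linarith
  have hμ0' : (0:ℝ) < μ' := by linarith
  have hah : (0:ℝ) ≤ a_h := hh.a_nonneg
  have halb : a_l < b_l := by exact_mod_cast hl.a_lt_b
  have hal0 : (0:ℝ) < a_l := lt_of_le_of_lt hah hab
  -- z-space crossing points, independent of the prior
  set z1 := zOf μ βd1 with hz1def
  set z0 := zOf μ βd0 with hz0def
  have hz1eq : z1 = zOf μ' βd1' :=
    crossing_z_eq hah hab halb hbb hμ0 hμhi hμ0' hμhi' hc1 hc1'
  have hz0eq : z0 = zOf μ' βd0' :=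
    crossing_z_eq hah hab halb hbb hμ0 hμhi hμ0' hμhi' hc0 hc0'
  have hz1mem : z1 ∈ Ioo a_l b_l := crossing_z_mem hah hab halb hμ0 hμhi hc1
  have hz0mem : z0 ∈ Ioo a_l b_l := crossing_z_mem hah hab halb hμ0 hμhi hc0
  -- unit interval facts
  have hβd1u : βd1 ∈ Ioo (0:ℝ) 1 := crossing_unit hah hab halb hμ0 hμhi hc1
  have hβd0u : βd0 ∈ Ioo (0:ℝ) 1 := crossing_unit hah hab halb hμ0 hμhi hc0
  have hβd1u' : βd1' ∈ Ioo (0:ℝ) 1 := crossing_unit hah hab halb hμ0' hμhi' hc1'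
  have hβd0u' : βd0' ∈ Ioo (0:ℝ) 1 := crossing_unit hah hab halb hμ0' hμhi' hc0'
  have hβμu : βμ ∈ Ioo (0:ℝ) 1 := ⟨lt_trans hβd1u.1 hβμ.1, lt_trans hβμ.2 hβd0u.2⟩
  have hβμu' : βμ' ∈ Ioo (0:ℝ) 1 := ⟨lt_trans hβd1u'.1 hβμ'.1, lt_trans hβμ'.2 hβd0u'.2⟩
  -- the z-points of the two solutions
  set w := zOf μ βμ with hwdef
  set w' := zOf μ' βμ' with hwdef'
  have hwmem : w ∈ Ioo z1 z0 :=
    ⟨zOf_strict_mono hμ0 hμhi hβd1u.1.le hβμ.1 hβμu.2,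
     zOf_strict_mono hμ0 hμhi hβμu.1.le hβμ.2 hβd0u.2⟩
  have hwmem' : w' ∈ Ioo z1 z0 := by
    rw [hz1eq, hz0eq]
    exact ⟨zOf_strict_mono hμ0' hμhi' hβd1u'.1.le hβμ'.1 hβμu'.2,
      zOf_strict_mono hμ0' hμhi' hβμu'.1.le hβμ'.2 hβd0u'.2⟩
  -- generic facts on the interval (z1, z0)
  have hsub : Ioo z1 z0 ⊆ Ioo a_l b_l := fun x hx => ⟨lt_trans hz1mem.1 hx.1, lt_trans hx.2 hz0mem.2⟩
  have hxb_h : ∀ x ∈ Ioo a_l b_l, (x : EReal) < b_h := fun x hx =>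
    lt_trans (by exact_mod_cast hx.2) hbb
  have hx0 : ∀ x ∈ Ioo a_l b_l, (0:ℝ) ≤ x := fun x hx => le_of_lt (lt_trans hal0 hx.1)
  -- CDF bounds on (a_l, b_l)
  have hFh_pos : ∀ s : Fin 2, ∀ x ∈ Ioo a_l b_l, 0 < Fs fh s x := fun s x hx =>
    hh.Fs_pos s (lt_trans hab hx.1)
  have hFh_lt1 : ∀ s : Fin 2, ∀ x ∈ Ioo a_l b_l, Fs fh s x < 1 := fun s x hx =>
    hh.Fs_lt_one s (hx0 x hx) (hxb_h x hx)
  have hFl_pos : ∀ s : Fin 2, ∀ x ∈ Ioo a_l b_l, 0 < Fs fl s x := fun s x hx =>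
    hl.Fs_pos s hx.1
  have hFl_lt1 : ∀ s : Fin 2, ∀ x ∈ Ioo a_l b_l, Fs fl s x < 1 := fun s x hx =>
    hl.Fs_lt_one s (hx0 x hx) (by exact_mod_cast hx.2)
  -- ratio monotonicity on (z1, z0)
  have hGr : ∀ s : Fin 2, StrictMonoOn (fun x => Fs fl s x / Fs fh s x) (Ioo z1 z0) := by
    intro s
    apply ratio_strictMonoOn (fun x => hl.hasDerivAt_Fs s x) (fun x => hh.hasDerivAt_Fs s x)
      (fun x hx => hFh_pos s x (hsub hx))
    intro x hx
    have hd := (hdom s x (hsub hx).1 (hsub hx).2).1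
    rw [gt_iff_lt, div_lt_div_iff₀ (hFh_pos s x (hsub hx)) (hFl_pos s x (hsub hx))] at hd
    show Fs fl s x * fs fh s x < fs fl s x * Fs fh s x
    linarith
  have hG : ∀ s : Fin 2, StrictAntiOn (fun x => (1 - Fs fl s x) / (1 - Fs fh s x)) (Ioo z1 z0) := by
    intro s
    apply ratio_strictAntiOn (u := fun x => 1 - Fs fl s x) (v := fun x => 1 - Fs fh s x)
      (du := fun x => -fs fl s x) (dv := fun x => -fs fh s x)
      (fun x => (hl.hasDerivAt_Fs s x).const_sub 1) (fun x => (hh.hasDerivAt_Fs s x).const_sub 1)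
      (fun x hx => by show (0:ℝ) < 1 - Fs fh s x; linarith [hFh_lt1 s x (hsub hx)])
    intro x hx
    have hd := (hdom s x (hsub hx).1 (hsub hx).2).2
    rw [gt_iff_lt, div_lt_div_iff₀ (show (0:ℝ) < 1 - Fs fh s x by linarith [hFh_lt1 s x (hsub hx)])
      (show (0:ℝ) < 1 - Fs fl s x by linarith [hFl_lt1 s x (hsub hx)])] at hd
    show -fs fl s x * (1 - Fs fh s x) < (1 - Fs fl s x) * -fs fh s x
    nlinarith
  -- suppose not
  by_contra hcon
  push_neg at hcon
  -- then w' < w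
  have hww : w' < w := by
    calc w' = zOf μ' βμ' := hwdef'
    _ ≤ zOf μ' βμ := zOf_mono hμ0' hμhi' hβμu'.1.le hcon hβμu.2
    _ < zOf μ βμ := zOf_anti_mu hμ0 hμhi hμhi' hμμ' hβμu.1 hβμu.2
  -- pointwise CDF facts at w and w'
  have hsign1 : ∀ x ∈ Ioo z1 z0, Fs fh 1 x < Fs fl 1 x := by
    intro x hx
    have := crossing_sign_gt hah hab halb hμ0 hμhi hc1 (lt_trans hab (hsub hx).1)
      (hxb_h x (hsub hx)) hx.1
    linarith
  have hsign0 : ∀ x ∈ Ioo z1 z0, Fs fl 0 x < Fs fh 0 x := by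
    intro x hx
    have := crossing_sign_lt hah hab halb hμ0 hμhi hc0 (lt_trans hab (hsub hx).1)
      (hxb_h x (hsub hx)) hx.2
    linarith
  -- rewrite the two indifference equations via phiFn
  have eL : ∀ (ν β : ℝ), indiffLHS fh fl ν p β = β * phiFn p (Fs fh 1 (zOf ν β)) (Fs fl 1 (zOf ν β)) := by
    intro ν β; rfl
  have eR : ∀ (ν β : ℝ), indiffRHS fh fl ν p β
      = (1 - β) * phiFn p (1 - Fs fh 0 (zOf ν β)) (1 - Fs fl 0 (zOf ν β)) := by
    intro ν β
    simp only [indiffRHS, phiFn, H, sub_sub_cancel]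
  -- Φ1 values
  have hΦ1w_pos : 0 < phiFn p (Fs fh 1 w) (Fs fl 1 w) :=
    phiFn_pos hp0 hp1 (hFh_pos 1 w (hsub hwmem)) (hFh_lt1 1 w (hsub hwmem))
      (hFl_pos 1 w (hsub hwmem)) (hFl_lt1 1 w (hsub hwmem)) (hsign1 w hwmem)
  have hΦ1w'_pos : 0 < phiFn p (Fs fh 1 w') (Fs fl 1 w') :=
    phiFn_pos hp0 hp1 (hFh_pos 1 w' (hsub hwmem')) (hFh_lt1 1 w' (hsub hwmem'))
      (hFl_pos 1 w' (hsub hwmem')) (hFl_lt1 1 w' (hsub hwmem')) (hsign1 w' hwmem')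
  have hΦ1lt : phiFn p (Fs fh 1 w') (Fs fl 1 w') < phiFn p (Fs fh 1 w) (Fs fl 1 w) := by
    apply phiFn_strict hp0 hp1 (hFh_pos 1 w' (hsub hwmem')) (hFh_lt1 1 w' (hsub hwmem'))
      (hFl_pos 1 w' (hsub hwmem')) (hFl_lt1 1 w' (hsub hwmem'))
      (hFh_pos 1 w (hsub hwmem)) (hFh_lt1 1 w (hsub hwmem))
      (hFl_pos 1 w (hsub hwmem)) (hFl_lt1 1 w (hsub hwmem))
    · exact hG 1 hwmem' hwmem hww
    · exact hGr 1 hwmem' hwmem hww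
  -- Φ0 values
  have hΦ0w_pos : 0 < phiFn p (1 - Fs fh 0 w) (1 - Fs fl 0 w) :=
    phiFn_pos hp0 hp1 (by linarith [hFh_lt1 0 w (hsub hwmem)]) (by linarith [hFh_pos 0 w (hsub hwmem)])
      (by linarith [hFl_lt1 0 w (hsub hwmem)]) (by linarith [hFl_pos 0 w (hsub hwmem)])
      (by linarith [hsign0 w hwmem])
  have hΦ0w'_pos : 0 < phiFn p (1 - Fs fh 0 w') (1 - Fs fl 0 w') :=
    phiFn_pos hp0 hp1 (by linarith [hFh_lt1 0 w' (hsub hwmem')]) (by linarith [hFh_pos 0 w' (hsub hwmem')])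
      (by linarith [hFl_lt1 0 w' (hsub hwmem')]) (by linarith [hFl_pos 0 w' (hsub hwmem')])
      (by linarith [hsign0 w' hwmem'])
  have hΦ0lt : phiFn p (1 - Fs fh 0 w) (1 - Fs fl 0 w)
      < phiFn p (1 - Fs fh 0 w') (1 - Fs fl 0 w') := by
    apply phiFn_strict hp0 hp1 (by linarith [hFh_lt1 0 w (hsub hwmem)]) (by linarith [hFh_pos 0 w (hsub hwmem)])
      (by linarith [hFl_lt1 0 w (hsub hwmem)]) (by linarith [hFl_pos 0 w (hsub hwmem)])
      (by linarith [hFh_lt1 0 w' (hsub hwmem')]) (by linarith [hFh_pos 0 w' (hsub hwmem')])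
      (by linarith [hFl_lt1 0 w' (hsub hwmem')]) (by linarith [hFl_pos 0 w' (hsub hwmem')])
    · rw [sub_sub_cancel, sub_sub_cancel, sub_sub_cancel, sub_sub_cancel]
      exact hGr 0 hwmem' hwmem hww
    · exact hG 0 hwmem' hwmem hww
  -- derive the two ratio equalities
  rw [eL, eR] at heq heq'
  rw [← hwdef] at heq
  have heqw' : βμ' * phiFn p (Fs fh 1 w') (Fs fl 1 w')
      = (1 - βμ') * phiFn p (1 - Fs fh 0 w') (1 - Fs fl 0 w') := by
    rw [hwdef']; exact heq'
  have hr : βμ / (1 - βμ) = phiFn p (1 - Fs fh 0 w) (1 - Fs fl 0 w)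
      / phiFn p (Fs fh 1 w) (Fs fl 1 w) := by
    rw [div_eq_div_iff (by linarith [hβμu.2]) hΦ1w_pos.ne']
    linarith [heq]
  have hr' : βμ' / (1 - βμ') = phiFn p (1 - Fs fh 0 w') (1 - Fs fl 0 w')
      / phiFn p (Fs fh 1 w') (Fs fl 1 w') := by
    rw [div_eq_div_iff (by linarith [hβμu'.2]) hΦ1w'_pos.ne']
    linarith [heqw']
  -- the chain of inequalities
  have hchain : βμ / (1 - βμ) < βμ' / (1 - βμ') := by
    rw [hr, hr']
    exact div_lt_div₀ hΦ0lt (le_of_lt hΦ1lt) (le_of_lt hΦ0w'_pos) hΦ1w'_pos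
  have hmono : βμ' / (1 - βμ') ≤ βμ / (1 - βμ) := by
    exact div_le_div₀ (le_of_lt hβμu.1) hcon (by linarith [hβμu.2]) (by linarith)
  linarith
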